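/- arXiv:1910.12250 — 4 statements merged into one kernel-verified Lean document; each statement's English description precedes it below -/
import Mathlib

section
/- For ω > 1/4 and Ê = Ē₁ := (1/27)(36ω − ((12ω + 1)³)^{1/2} − 1), the discriminant-type quantity satisfies: the cubic t³ + (1/2 − 2ω)t² − Ē₁ t + Ē₁²/2 has a repeated positive root, i.e. there exists t₀ > 0 with the cubic and its derivative both vanishing at t₀. -/
/-- At the tangency energy Ē₁ the cubic has a repeated positive root. -/
theorem stmt_10 (ω E : ℝ) (hω : 1/4 < ω)
    (hE : E = (1/27) * (36 * ω - Real.sqrt ((12 * ω + 1)^3) - 1)) :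
    ∃ t₀ > (0 : ℝ),
      t₀^3 + (1/2 - 2 * ω) * t₀^2 - E * t₀ + E^2 / 2 = 0 ∧
      3 * t₀^2 + 2 * (1/2 - 2 * ω) * t₀ - E = 0 := by
  set s := Real.sqrt (12 * ω + 1) with hsdef
  have h1 : (0:ℝ) ≤ 12 * ω + 1 := by linarith
  have hs2 : s ^ 2 = 12 * ω + 1 := Real.sq_sqrt h1
  have hroot : Real.sqrt ((12 * ω + 1) ^ 3) = s ^ 3 := by
    rw [show (12 * ω + 1) ^ 3 = (s ^ 3) ^ 2 by rw [← hs2]; ring]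
    exact Real.sqrt_sq (by positivity)
  have hE2 : E = (-(s ^ 3) + 3 * s ^ 2 - 4) / 27 := by
    rw [hE, hroot]; linarith
  have hsgt : 2 < s := by
    rw [hsdef, show (2:ℝ) = Real.sqrt 4 by
      rw [show (4:ℝ) = 2 ^ 2 by norm_num, Real.sqrt_sq (by norm_num)]]
    exact Real.sqrt_lt_sqrt (by norm_num) (by linarith)
  have hw : ω = (s ^ 2 - 1) / 12 := by linarith
  refine ⟨(s - 2) * (s + 1) / 9, by nlinarith, ?_, ?_⟩
  · rw [hE2, hw]; ring
  · rw [hE2, hw]; ring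
end

section
/- For ω > ε²/4 (ε ∈ (0,1]) and Ê = Ē₂ := (1/27)(36ε²ω − (ε²(12ω + ε²)³)^{1/2} − ε⁴), the cubic t³ + (ε²/2 − 2ω)t² − Ē₂ t + Ē₂²/(2ε²) has a repeated positive root. -/
/-- At the tangency energy Ē₂ the cubic for the second defect has a
repeated positive root. -/
theorem stmt_11 (ω ε E : ℝ) (hε0 : 0 < ε) (hε1 : ε ≤ 1) (hω : ε^2/4 < ω)
    (hE : E = (1/27) * (36 * ε^2 * ω - Real.sqrt (ε^2 * (12 * ω + ε^2)^3) - ε^4)) :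
    ∃ t₀ > (0 : ℝ),
      t₀^3 + (ε^2/2 - 2 * ω) * t₀^2 - E * t₀ + E^2 / (2 * ε^2) = 0 ∧
      3 * t₀^2 + 2 * (ε^2/2 - 2 * ω) * t₀ - E = 0 := by
  have hX : (0:ℝ) ≤ 12 * ω + ε^2 := by nlinarith [sq_nonneg ε]
  set q := Real.sqrt (12 * ω + ε^2) with hqdef
  have hq0 : 0 ≤ q := Real.sqrt_nonneg _
  have hq : q^2 = 12 * ω + ε^2 := Real.sq_sqrt hX
  have hs : Real.sqrt (ε^2 * (12 * ω + ε^2)^3) = ε * q^3 := by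
    have h1 : ε^2 * (12 * ω + ε^2)^3 = (ε * q^3)^2 := by
      have : (ε * q^3)^2 = ε^2 * (q^2)^3 := by ring
      rw [this, hq]
    rw [h1]
    exact Real.sqrt_sq (by positivity)
  rw [hs] at hE
  refine ⟨(12 * ω - ε^2 - ε * q) / 9, ?_, ?_, ?_⟩
  · have hprod : (12 * ω - ε^2 - ε * q) * (12 * ω - ε^2 + ε * q) = 36 * ω * (4 * ω - ε^2) := by
      linear_combination (-(ε^2)) * hq
    have hpos : 0 < 36 * ω * (4 * ω - ε^2) := by nlinarith [sq_nonneg ε]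
    have hsum : 0 < 12 * ω - ε^2 + ε * q := by
      have : 0 < 12 * ω - ε^2 := by nlinarith [sq_nonneg ε]
      nlinarith [mul_nonneg hε0.le hq0]
    nlinarith [hprod, hpos, hsum]
  · subst hE
    set E : ℝ := 1/27 * (36 * ε^2 * ω - ε * q^3 - ε^4) with hEdef
    set T : ℝ := (12 * ω - ε^2 - ε * q) / 9 with hTdef
    have h2ε : (2 : ℝ) * ε^2 ≠ 0 := by positivity
    have key : 2 * ε^2 * (T^3 + (ε^2/2 - 2 * ω) * T^2 - E * T) + E^2 = 0 := by
      rw [hEdef, hTdef]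
      linear_combination ((1/729) * ε^2 * q^4 + (-5/729) * ε^4 * q^2 + (-2/243) * ε^5 * q
        + (-2/729) * ε^6 + (4/243) * ω * ε^2 * q^2 + (-4/243) * ω * ε^4
        + (16/81) * ω^2 * ε^2) * hq
    have expand : T^3 + (ε^2/2 - 2 * ω) * T^2 - E * T + E^2 / (2 * ε^2)
        = (2 * ε^2 * (T^3 + (ε^2/2 - 2 * ω) * T^2 - E * T) + E^2) / (2 * ε^2) := by
      field_simp
    rw [expand, key, zero_div]
  · subst hE
    linear_combination ((1/27) * ε * q + (1/27) * ε^2) * hq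
end

section
/- Let ω > 1/4 and Ê ∈ (Ē₁, 0) where Ē₁ = (1/27)(36ω − ((12ω+1)³)^{1/2} − 1). Then the cubic t³ + (1/2 − 2ω)t² − Ê t + Ê²/2 = 0 has two distinct positive real roots. -/
/-- Auxiliary: the cubic g(t) = t³ - m t² + e t + e²/2 is negative at its local min. -/
lemma aux_negmin (m e : ℝ) (hm0 : 0 < m) (he0 : 0 < e)
    (hP : (27 * e + 18 * m + 8)^2 < (6 * m + 4)^3) :
    ∃ t₀ : ℝ, 0 < t₀ ∧ t₀^3 - m * t₀^2 + e * t₀ + e^2 / 2 < 0 := by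
  have hem : 3 * e < m^2 := by
    have hQ : (6 * m + 4)^3 ≤ (9 * m^2 + 18 * m + 8)^2 := by
      nlinarith [sq_nonneg (m * (3 * m + 2))]
    have hb : (0:ℝ) ≤ 27 * e + 18 * m + 8 := by positivity
    by_contra h
    push_neg at h
    have : (9 * m^2 + 18 * m + 8)^2 ≤ (27 * e + 18 * m + 8)^2 := by
      apply pow_le_pow_left₀ (by positivity) (by linarith)
    linarith
  have hc0 : 0 < m^2 - 3 * e := by linarith
  obtain ⟨s, hs⟩ : ∃ s, s = Real.sqrt (m^2 - 3 * e) := ⟨_, rfl⟩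
  have hs0 : 0 < s := hs ▸ Real.sqrt_pos.mpr hc0
  have hs2 : s^2 = m^2 - 3 * e := hs ▸ Real.sq_sqrt hc0.le
  have hD : (2 * (m^2 - 3 * e) * s)^2 > (9 * m * e + 27 * e^2 / 2 - 2 * m^3)^2 := by
    have h1 : (2 * (m^2 - 3 * e) * s)^2 = 4 * (m^2 - 3 * e)^3 := by
      rw [mul_pow, mul_pow, hs2]; ring
    have h2 : 4 * (m^2 - 3 * e)^3 - (9 * m * e + 27 * e^2 / 2 - 2 * m^3)^2
        = (e^2 / 4) * ((6 * m + 4)^3 - (27 * e + 18 * m + 8)^2) := by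
      ring
    have h3 : 0 < (e^2 / 4) * ((6 * m + 4)^3 - (27 * e + 18 * m + 8)^2) := by
      apply mul_pos (by positivity) (by linarith)
    linarith
  have hK : 2 * (m^2 - 3 * e) * s > 9 * m * e + 27 * e^2 / 2 - 2 * m^3 := by
    by_contra h
    push_neg at h
    have hL : 0 < 2 * (m^2 - 3 * e) * s := by positivity
    have : (2 * (m^2 - 3 * e) * s)^2 ≤ (9 * m * e + 27 * e^2 / 2 - 2 * m^3)^2 := by
      apply pow_le_pow_left₀ hL.le h
    linarith
  refine ⟨(m + s) / 3, by positivity, ?_⟩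
  have key : 27 * (((m + s) / 3)^3 - m * ((m + s) / 3)^2 + e * ((m + s) / 3) + e^2 / 2)
      = -2 * m^3 + 9 * m * e + 27 * e^2 / 2 - 2 * (m^2 - 3 * e) * s := by
    linear_combination s * hs2
  nlinarith [key, hK]

/-- For ω > 1/4 and E ∈ (Ē₁, 0) the cubic has two distinct positive roots. -/
theorem stmt_12 (ω E : ℝ) (hω : 1/4 < ω)
    (hE1 : (1/27) * (36 * ω - Real.sqrt ((12 * ω + 1)^3) - 1) < E) (hE0 : E < 0) :
    ∃ t₁ t₂ : ℝ, 0 < t₁ ∧ 0 < t₂ ∧ t₁ ≠ t₂ ∧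
      t₁^3 + (1/2 - 2 * ω) * t₁^2 - E * t₁ + E^2 / 2 = 0 ∧
      t₂^3 + (1/2 - 2 * ω) * t₂^2 - E * t₂ + E^2 / 2 = 0 := by
  obtain ⟨m, hm⟩ : ∃ m : ℝ, m = 2 * ω - 1/2 := ⟨_, rfl⟩
  obtain ⟨e, he⟩ : ∃ e : ℝ, e = -E := ⟨_, rfl⟩
  have hm0 : 0 < m := by rw [hm]; linarith
  have he0 : 0 < e := by rw [he]; linarith
  have hx0 : (0:ℝ) ≤ (12 * ω + 1)^3 := by positivity
  have hsq : 27 * e + 18 * m + 8 < Real.sqrt ((12 * ω + 1)^3) := by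
    rw [hm, he]; linarith
  have hP : (27 * e + 18 * m + 8)^2 < (6 * m + 4)^3 := by
    have h1 : (0:ℝ) ≤ 27 * e + 18 * m + 8 := by positivity
    have h2 : (27 * e + 18 * m + 8)^2 < Real.sqrt ((12 * ω + 1)^3) ^ 2 := by
      apply pow_lt_pow_left₀ hsq h1 (by norm_num)
    rw [Real.sq_sqrt hx0] at h2
    have h4 : (12 * ω + 1)^3 = (6 * m + 4)^3 := by rw [hm]; ring
    linarith
  obtain ⟨t₀, ht0pos, ht0neg⟩ := aux_negmin m e hm0 he0 hP
  obtain ⟨f, hf⟩ : ∃ f : ℝ → ℝ, f = fun t => t^3 + (1/2 - 2 * ω) * t^2 - E * t + E^2 / 2 :=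
    ⟨_, rfl⟩
  have hfeq : ∀ t, f t = t^3 - m * t^2 + e * t + e^2 / 2 := by
    intro t; rw [hf, hm, he]; ring
  have hft0 : f t₀ < 0 := by rw [hfeq]; exact ht0neg
  have hf0 : 0 < f 0 := by
    rw [hfeq]; norm_num; positivity
  obtain ⟨T, hT⟩ : ∃ T : ℝ, T = m + t₀ + 1 := ⟨_, rfl⟩
  have hTt : t₀ < T := by rw [hT]; linarith
  have hfT : 0 < f T := by
    rw [hfeq]
    have h1 : m < T := by rw [hT]; linarith
    have h2 : 0 < T := by rw [hT]; linarith
    nlinarith [mul_pos (mul_pos h2 h2) (by linarith : (0:ℝ) < T - m),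
      mul_pos he0 h2, sq_nonneg e]
  have hcont : Continuous f := by
    rw [hf]; continuity
  have h1 : (0:ℝ) ∈ Set.Icc (f t₀) (f 0) := ⟨hft0.le, hf0.le⟩
  obtain ⟨t₁, ht₁mem, ht₁⟩ := intermediate_value_Icc' ht0pos.le hcont.continuousOn h1
  have h2 : (0:ℝ) ∈ Set.Icc (f t₀) (f T) := ⟨hft0.le, hfT.le⟩
  obtain ⟨t₂, ht₂mem, ht₂⟩ := intermediate_value_Icc hTt.le hcont.continuousOn h2
  have hroot1 : t₁^3 + (1/2 - 2 * ω) * t₁^2 - E * t₁ + E^2 / 2 = 0 := by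
    have := ht₁; rw [hf] at this; simpa using this
  have hroot2 : t₂^3 + (1/2 - 2 * ω) * t₂^2 - E * t₂ + E^2 / 2 = 0 := by
    have := ht₂; rw [hf] at this; simpa using this
  have h1' : t₁ < t₀ := lt_of_le_of_ne ht₁mem.2 (fun h => hft0.ne (by rw [← h]; exact ht₁))
  have h2' : t₀ < t₂ := lt_of_le_of_ne ht₂mem.1 (fun h => hft0.ne (by rw [h]; exact ht₂))
  have ht₁pos : 0 < t₁ := by
    rcases eq_or_lt_of_le ht₁mem.1 with h | h
    · exact absurd (by rw [← h] at ht₁; exact ht₁ : f 0 = 0) hf0.ne'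
    · exact h
  exact ⟨t₁, t₂, ht₁pos, lt_trans ht0pos h2', ne_of_lt (h1'.trans h2'), hroot1, hroot2⟩
end

section
/- Let ω ≤ 1/4 and Ê ∈ (−ω²/2, 0). Then there is no u₁ > 0 with ωu₁² − u₁⁴/2 ≥ 0 satisfying u₁² − 2u₁√(ωu₁² − u₁⁴/2) = Ê. -/
/-- For ω ≤ 1/4 and E ∈ (−ω²/2, 0) there is no positive u₁ satisfying
the first jump condition. -/
theorem stmt_13 (ω E : ℝ) (hω : ω ≤ 1/4) (hE1 : -ω^2/2 < E) (hE0 : E < 0) :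
    ¬ ∃ u₁ : ℝ, 0 < u₁ ∧ 0 ≤ ω * u₁^2 - u₁^4 / 2 ∧
      u₁^2 - 2 * u₁ * Real.sqrt (ω * u₁^2 - u₁^4 / 2) = E := by
  rintro ⟨u, hu, hnn, heq⟩
  set s := Real.sqrt (ω * u^2 - u^4 / 2) with hsdef
  have hs : s ^ 2 = ω * u^2 - u^4 / 2 := Real.sq_sqrt hnn
  have hs0 : 0 ≤ s := Real.sqrt_nonneg _
  have h1 : u ^ 2 < 2 * u * s := by linarith
  have h2 : u ^ 4 < 4 * u ^ 2 * s ^ 2 := by nlinarith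
  nlinarith [pow_pos hu 6, pow_pos hu 4]
end
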